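/- Let S = ⟨v₀,…,v_h⟩ be a numerical semigroup generated by a characteristic sequence. Then the conductor of S is an even number and the genus of S satisfies g(S) = c(S)/2 (i.e., exactly half of the integers in [0, c(S)−1] are gaps). -/

import Mathlib

/-- A numerical semigroup: a subset of ℕ containing 0, closed under addition,
with finite complement. -/
def IsNumericalSemigroup (S : Set ℕ) : Prop :=
  0 ∈ S ∧ (∀ a ∈ S, ∀ b ∈ S, a + b ∈ S) ∧ Sᶜ.Finite

/-- Frobenius number, as an integer (so that F(ℕ) = -1). -/
noncomputable def Frob (S : Set ℕ) : ℤ :=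
  sSup (((fun n : ℕ => (n : ℤ)) '' Sᶜ) ∪ {-1})

/-- Submonoid of ℕ generated by a set. -/
def GenSg (A : Set ℕ) : Set ℕ := (AddSubmonoid.closure A : Set ℕ)

/-- The gluing S ⊕_{d,γ} ℕ = d·S + ℕ·γ. -/
def Gluing (S : Set ℕ) (d γ : ℕ) : Set ℕ :=
  {x | ∃ s ∈ S, ∃ k : ℕ, x = d * s + k * γ}

/-- e_k = gcd(v₀, …, v_k). -/
def ee (v : ℕ → ℕ) (k : ℕ) : ℕ := (Finset.range (k + 1)).gcd v

/-- (v₀,…,v_h) is a characteristic sequence. -/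
def IsCharSeq (h : ℕ) (v : ℕ → ℕ) : Prop :=
  (∀ i ≤ h, 0 < v i) ∧
  (∀ k, 1 ≤ k → k ≤ h → ee v k < ee v (k - 1)) ∧
  ee v h = 1 ∧
  ∀ k, 1 ≤ k → k + 1 ≤ h → ee v (k - 1) * v k < ee v k * v (k + 1)

/-- T is a GSI-semigroup: T = S ⊕_{d,γ} ℕ where S = ⟨A⟩ is a numerical
semigroup, d ≥ 2, gcd(d,γ)=1 and γ > max{d·F(S), d·(max A)}. -/
def IsGSI (T : Set ℕ) : Prop :=
  ∃ (A : Finset ℕ) (d γ : ℕ), A.Nonempty ∧ 2 ≤ d ∧ Nat.Coprime d γ ∧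
    IsNumericalSemigroup (GenSg ↑A) ∧
    (γ : ℤ) > d * Frob (GenSg ↑A) ∧ (∀ a ∈ A, d * a < γ) ∧
    T = Gluing (GenSg ↑A) d γ

/-- integer membership -/
def memZ (S : Set ℕ) (x : ℤ) : Prop := 0 ≤ x ∧ x.toNat ∈ S

/-- symmetric with Frobenius number F -/
def SymWith (S : Set ℕ) (F : ℤ) : Prop := ∀ x : ℤ, memZ S x ↔ ¬ memZ S (F - x)

lemma memZ_natCast {S : Set ℕ} {n : ℕ} : memZ S n ↔ n ∈ S := by
  simp [memZ]

lemma SymWith.neg_one_le {S : Set ℕ} {F : ℤ} (sym : SymWith S F) : -1 ≤ F := by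
  have h := (sym (-1)).not_left
  have : memZ S (F - -1) := h.mp (by simp [memZ])
  have := this.1
  omega

lemma SymWith.memZ_of_gt {S : Set ℕ} {F : ℤ} (sym : SymWith S F) {x : ℤ}
    (hx : F < x) : memZ S x := by
  rw [sym x]
  intro hc
  have := hc.1
  omega

lemma SymWith.frob_eq {S : Set ℕ} {F : ℤ} (h0 : 0 ∈ S) (sym : SymWith S F) :
    Frob S = F := by
  have hub : ∀ x ∈ ((fun n : ℕ => (n : ℤ)) '' Sᶜ) ∪ {-1}, x ≤ F := by
    rintro x (⟨n, hn, rfl⟩ | hx)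
    · by_contra hc
      push_neg at hc
      exact hn (memZ_natCast.mp (sym.memZ_of_gt hc))
    · simp only [Set.mem_singleton_iff] at hx
      subst hx; exact sym.neg_one_le
  have hne : (((fun n : ℕ => (n : ℤ)) '' Sᶜ) ∪ {-1}).Nonempty := ⟨-1, Or.inr rfl⟩
  have hbdd : BddAbove (((fun n : ℕ => (n : ℤ)) '' Sᶜ) ∪ {-1}) := ⟨F, hub⟩
  refine le_antisymm (csSup_le hne hub) ?_
  rcases lt_or_ge F 0 with hF | hF
  · have : F = -1 := le_antisymm (by omega) sym.neg_one_le
    rw [this]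
    exact le_csSup hbdd (Or.inr rfl)
  · have hFnot : F.toNat ∉ S := by
      intro hc
      have h1 : memZ S 0 := ⟨le_refl _, h0⟩
      have := (sym 0).mp h1
      exact this ⟨by omega, by simpa using hc⟩
    have : F ∈ ((fun n : ℕ => (n : ℤ)) '' Sᶜ) ∪ {-1} :=
      Or.inl ⟨F.toNat, hFnot, by simp [Int.toNat_of_nonneg hF]⟩
    exact le_csSup hbdd this

open Classical in
lemma SymWith.genus {S : Set ℕ} {F : ℤ} (h0 : 0 ∈ S) (sym : SymWith S F) :
    2 * (Sᶜ.ncard : ℤ) = F + 1 := by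
  set c : ℕ := (F + 1).toNat with hc
  have hcF : (c : ℤ) = F + 1 := by have := sym.neg_one_le; omega
  have hlt : ∀ n : ℕ, n ∉ S → (n : ℤ) ≤ F := by
    intro n hn
    by_contra hgt
    push_neg at hgt
    exact hn (memZ_natCast.mp (sym.memZ_of_gt hgt))
  have hA : Sᶜ = ↑((Finset.range c).filter (fun n => n ∉ S)) := by
    ext n
    simp only [Set.mem_compl_iff, Finset.coe_filter, Finset.mem_range, Set.mem_setOf_eq]
    constructor
    · intro hn
      refine ⟨?_, hn⟩
      have := hlt n hn; omega
    · exact fun h => h.2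
  set A := (Finset.range c).filter (fun n => n ∉ S) with hAdef
  set B := (Finset.range c).filter (fun n => n ∈ S) with hBdef
  have hcard : A.card = B.card := by
    apply Finset.card_bij' (fun n _ => c - 1 - n) (fun n _ => c - 1 - n)
    · intro n hn
      simp only [hAdef, Finset.mem_filter, Finset.mem_range] at hn
      obtain ⟨hnc, hns⟩ := hn
      have hmem : memZ S (F - n) := by
        rcases Classical.em (memZ S (F - n)) with hm | hm
        · exact hm
        · have := ((sym n).mpr hm).2
          simp only [Int.toNat_natCast] at this
          exact absurd this hns
      simp only [hBdef, Finset.mem_filter, Finset.mem_range]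
      have h1 : ((c - 1 - n : ℕ) : ℤ) = F - n := by omega
      constructor
      · omega
      · have := hmem.2
        have h2 : (F - (n:ℤ)).toNat = c - 1 - n := by omega
        rwa [h2] at this
    · intro n hn
      simp only [hBdef, Finset.mem_filter, Finset.mem_range] at hn
      obtain ⟨hnc, hns⟩ := hn
      have hnot : ¬ memZ S (F - n) := (sym n).mp (memZ_natCast.mpr hns)
      simp only [hAdef, Finset.mem_filter, Finset.mem_range]
      have hFn : 0 ≤ F - (n : ℤ) := by omega
      have h2 : (F - (n:ℤ)).toNat = c - 1 - n := by omega
      constructor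
      · omega
      · intro hc2
        exact hnot ⟨hFn, by rwa [h2]⟩
    · intro n hn
      simp only [hAdef, Finset.mem_filter, Finset.mem_range] at hn
      omega
    · intro n hn
      simp only [hBdef, Finset.mem_filter, Finset.mem_range] at hn
      omega
  have hsum : B.card + A.card = c := by
    have := Finset.card_filter_add_card_filter_not (s := Finset.range c)
      (p := fun n => n ∈ S)
    simpa using this
  have : Sᶜ.ncard = A.card := by rw [hA, Set.ncard_coe_finset]
  rw [this]
  omega

section Gluing

variable {S : Set ℕ} {F : ℤ} {d γ : ℕ}

lemma nsmul_mem_of_mem (h0 : 0 ∈ S) (hadd : ∀ a ∈ S, ∀ b ∈ S, a + b ∈ S)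
    {a : ℕ} (ha : a ∈ S) : ∀ k : ℕ, k * a ∈ S := by
  intro k
  induction k with
  | zero => simpa using h0
  | succ n ih =>
      have := hadd _ ih _ ha
      have he : (n + 1) * a = n * a + a := by ring
      rwa [he]

lemma gluing_canonical (h0 : 0 ∈ S) (hadd : ∀ a ∈ S, ∀ b ∈ S, a + b ∈ S)
    (hd : 2 ≤ d) (hγS : γ ∈ S) {n : ℕ} (hn : n ∈ Gluing S d γ) :
    ∃ s ∈ S, ∃ k < d, n = d * s + k * γ := by
  obtain ⟨s, hs, k, rfl⟩ := hn
  refine ⟨s + (k / d) * γ, hadd _ hs _ (nsmul_mem_of_mem h0 hadd hγS _), k % d,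
    Nat.mod_lt _ (by omega), ?_⟩
  have := Nat.div_add_mod k d
  nlinarith [Nat.div_add_mod k d]

/-- key characterization of gluing membership -/
lemma gluing_memZ (h0 : 0 ∈ S) (hadd : ∀ a ∈ S, ∀ b ∈ S, a + b ∈ S)
    (hd : 2 ≤ d) (hco : Nat.Coprime d γ) (hγS : γ ∈ S)
    {m : ℤ} {k : ℕ} (hk : k < d) (hdvd : (d : ℤ) ∣ m - k * γ) :
    (memZ (Gluing S d γ) m ↔ memZ S ((m - k * γ) / d)) := by
  have hd0 : (0:ℤ) < d := by positivity
  constructor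
  · rintro ⟨hm0, hmem⟩
    obtain ⟨s, hs, k', hk', heq⟩ := gluing_canonical h0 hadd hd hγS hmem
    have heqZ : m = d * s + k' * γ := by
      have h : ((m.toNat : ℤ)) = (d:ℤ) * s + (k':ℤ) * γ := by exact_mod_cast heq
      rw [Int.toNat_of_nonneg hm0] at h
      exact h
    have hdvd' : (d:ℤ) ∣ ((k':ℤ) - k) * γ := by
      have h1 : ((k':ℤ) - k) * γ = (m - k * γ) - (m - k' * γ) := by ring
      have h2 : (d:ℤ) ∣ m - k' * γ := ⟨s, by omega⟩
      rw [h1]; exact dvd_sub hdvd h2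
    have hcoZ : IsCoprime (d:ℤ) (γ:ℤ) := by
      rw [Nat.isCoprime_iff_coprime]; exact hco
    have hdk : (d:ℤ) ∣ ((k':ℤ) - k) := hcoZ.dvd_of_dvd_mul_right hdvd'
    have hkk : (k':ℤ) = k := by
      have habs : |(k':ℤ) - k| < d := abs_lt.mpr ⟨by omega, by omega⟩
      have := Int.eq_zero_of_abs_lt_dvd hdk habs
      omega
    rw [hkk] at heqZ
    have hq : (m - k * γ) / d = s := by
      rw [show m - (k:ℤ) * γ = (d:ℤ) * s by linarith [heqZ]]
      exact Int.mul_ediv_cancel_left _ (by omega)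
    rw [hq]
    exact ⟨by positivity, by simpa using hs⟩
  · rintro ⟨hq0, hqmem⟩
    set q := (m - k * γ) / d with hqdef
    have hm : m = d * q + k * γ := by
      have h2 : (d:ℤ) * q = m - k * γ := by
        rw [mul_comm]; exact Int.ediv_mul_cancel hdvd
      linarith
    have hm0 : 0 ≤ m := by
      have h3 : 0 ≤ (d:ℤ) * q := mul_nonneg (by positivity) hq0
      have h4 : 0 ≤ (k:ℤ) * γ := by positivity
      linarith
    refine ⟨hm0, ⟨q.toNat, hqmem, k, ?_⟩⟩
    have h5 : ((m.toNat : ℤ)) = (d:ℤ) * (q.toNat:ℤ) + (k:ℤ) * γ := by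
      rw [Int.toNat_of_nonneg hm0, Int.toNat_of_nonneg hq0]; linarith
    exact_mod_cast h5

lemma exists_rep (hd : 2 ≤ d) (hco : Nat.Coprime d γ) (m : ℤ) :
    ∃ k : ℕ, k < d ∧ (d : ℤ) ∣ m - k * γ := by
  have hcoZ : IsCoprime (d:ℤ) (γ:ℤ) := by
    rw [Nat.isCoprime_iff_coprime]; exact hco
  obtain ⟨u, w, huw⟩ := hcoZ
  set k0 : ℤ := (m * w) % d with hk0
  have hd0 : (0:ℤ) < d := by positivity
  have h0k : 0 ≤ k0 := Int.emod_nonneg _ (by omega)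
  have hkd : k0 < d := Int.emod_lt_of_pos _ hd0
  refine ⟨k0.toNat, by omega, ?_⟩
  have h1 : (d:ℤ) ∣ m * w - k0 := Int.dvd_self_sub_of_emod_eq rfl
  obtain ⟨t, ht⟩ := h1
  have h2 : ((k0.toNat : ℤ)) = k0 := by omega
  rw [h2]
  exact ⟨m * u + t * γ, by linear_combination (γ:ℤ) * ht - m * huw⟩

lemma SymWith.gluing (h0 : 0 ∈ S) (hadd : ∀ a ∈ S, ∀ b ∈ S, a + b ∈ S)
    (sym : SymWith S F) (hd : 2 ≤ d) (hco : Nat.Coprime d γ)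
    (hγ : (γ:ℤ) > d * F) :
    SymWith (Gluing S d γ) (d * F + (d - 1) * γ) := by
  have hF1 : -1 ≤ F := sym.neg_one_le
  have hγF : F < (γ:ℤ) := by nlinarith
  have hγS : γ ∈ S := by
    have := sym.memZ_of_gt hγF
    simpa [memZ] using this.2
  intro x
  obtain ⟨k, hk, hdvd⟩ := exists_rep hd hco x
  set FT : ℤ := d * F + (d - 1) * γ with hFT
  set k2 : ℕ := d - 1 - k with hk2
  have hk2d : k2 < d := by omega
  have hk2Z : (k2 : ℤ) = (d:ℤ) - 1 - k := by omega
  have hdvd2 : (d:ℤ) ∣ (FT - x) - k2 * γ := by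
    have he : (FT - x) - k2 * γ = d * F - (x - k * γ) := by
      rw [hk2Z, hFT]; ring
    rw [he]
    exact dvd_sub ⟨F, rfl⟩ hdvd
  have hq2 : ((FT - x) - k2 * γ) / d = F - (x - k * γ) / d := by
    obtain ⟨q, hq⟩ := hdvd
    have he : (FT - x) - k2 * γ = d * (F - q) := by
      rw [hk2Z, hFT]; linear_combination -hq
    rw [he, hq, Int.mul_ediv_cancel_left _ (by omega : (d:ℤ) ≠ 0),
      Int.mul_ediv_cancel_left _ (by omega : (d:ℤ) ≠ 0)]
  rw [gluing_memZ h0 hadd hd hco hγS hk hdvd,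
    gluing_memZ h0 hadd hd hco hγS hk2d hdvd2, hq2]
  exact sym _

end Gluing

section GenSgFacts

lemma genSg_zero_mem (A : Set ℕ) : 0 ∈ GenSg A := AddSubmonoid.zero_mem _

lemma genSg_add_mem (A : Set ℕ) : ∀ a ∈ GenSg A, ∀ b ∈ GenSg A, a + b ∈ GenSg A :=
  fun a ha b hb => AddSubmonoid.add_mem _ ha hb

lemma genSg_one : GenSg {1} = Set.univ := by
  ext x
  simp only [Set.mem_univ, iff_true, GenSg, SetLike.mem_coe]
  rw [AddSubmonoid.mem_closure_singleton]
  exact ⟨x, by simp⟩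

lemma symWith_univ : SymWith Set.univ (-1) := by
  intro x
  simp only [memZ, Set.mem_univ, and_true]
  omega

lemma gluing_genSg (A : Set ℕ) (d γ : ℕ) :
    Gluing (GenSg A) d γ = GenSg ((fun a => d * a) '' A ∪ {γ}) := by
  apply Set.Subset.antisymm
  · rintro x ⟨s, hs, k, rfl⟩
    have h1 : d * s ∈ AddSubmonoid.closure ((fun a => d * a) '' A ∪ {γ}) := by
      induction hs using AddSubmonoid.closure_induction with
      | mem y hy =>
          exact AddSubmonoid.subset_closure (Or.inl ⟨y, hy, rfl⟩)
      | zero => simpa using AddSubmonoid.zero_mem _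
      | add y z _ _ hy hz =>
          have : d * (y + z) = d * y + d * z := by ring
          rw [this]
          exact AddSubmonoid.add_mem _ hy hz
    have h2 : k * γ ∈ AddSubmonoid.closure ((fun a => d * a) '' A ∪ {γ}) := by
      induction k with
      | zero => simpa using AddSubmonoid.zero_mem _
      | succ n ih =>
          have he : (n + 1) * γ = n * γ + γ := by ring
          rw [he]
          exact AddSubmonoid.add_mem _ ih (AddSubmonoid.subset_closure (Or.inr rfl))
    exact AddSubmonoid.add_mem _ h1 h2
  · intro x hx
    change x ∈ AddSubmonoid.closure ((fun a => d * a) '' A ∪ {γ}) at hx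
    induction hx using AddSubmonoid.closure_induction with
    | mem y hy =>
        rcases hy with ⟨a, ha, rfl⟩ | hy
        · exact ⟨a, AddSubmonoid.subset_closure ha, 0, by ring⟩
        · simp only [Set.mem_singleton_iff] at hy
          exact ⟨0, genSg_zero_mem A, 1, by simp [hy]⟩
    | zero => exact ⟨0, genSg_zero_mem A, 0, by simp⟩
    | add y z _ _ hy hz =>
        obtain ⟨s1, hs1, k1, rfl⟩ := hy
        obtain ⟨s2, hs2, k2, rfl⟩ := hz
        exact ⟨s1 + s2, genSg_add_mem A _ hs1 _ hs2, k1 + k2, by ring⟩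

end GenSgFacts

section EE

variable {v : ℕ → ℕ}

lemma ee_zero : ee v 0 = v 0 := by
  simp [ee, Finset.range_one]

lemma ee_succ (k : ℕ) : ee v (k + 1) = Nat.gcd (v (k + 1)) (ee v k) := by
  rw [ee, ee, Finset.range_add_one, Finset.gcd_insert]
  rfl

lemma ee_dvd {i k : ℕ} (hik : i ≤ k) : ee v k ∣ v i :=
  Finset.gcd_dvd (Finset.mem_range.mpr (by omega))

lemma ee_pos (h0 : 0 < v 0) (k : ℕ) : 0 < ee v k := by
  rcases Nat.eq_zero_or_pos (ee v k) with he | he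
  · exfalso
    have := Finset.gcd_eq_zero_iff.mp he 0 (Finset.mem_range.mpr (by omega))
    omega
  · exact he

end EE

lemma charSeq_induction (h : ℕ) (v : ℕ → ℕ) (hv : IsCharSeq h v) :
    ∀ j, j ≤ h → ∃ F : ℤ,
      SymWith (GenSg ((fun i => v i / ee v j) '' {i | i ≤ j})) F ∧
      (j < h → (ee v j : ℤ) * F < v (j + 1)) := by
  obtain ⟨hpos, hdec, heh, hineq⟩ := hv
  intro j
  induction j with
  | zero =>
      intro _
      refine ⟨-1, ?_, ?_⟩
      · have hs : {i : ℕ | i ≤ 0} = {0} := by ext i; simp [Nat.le_zero]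
        have him : (fun i => v i / ee v 0) '' {i : ℕ | i ≤ 0} = {1} := by
          rw [hs, Set.image_singleton, ee_zero, Nat.div_self (hpos 0 (by omega))]
        rw [him, genSg_one]
        exact symWith_univ
      · intro hh
        have h1 : 0 < v 1 := hpos 1 (by omega)
        have h2 : (0:ℤ) < ee v 0 := by exact_mod_cast ee_pos (hpos 0 (by omega)) 0
        nlinarith
  | succ n ih =>
      intro hn1
      obtain ⟨F, symF, hbF⟩ := ih (by omega)
      have hbound := hbF (by omega)
      have hv0 : 0 < v 0 := hpos 0 (by omega)
      set E : ℕ := ee v n with hEdef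
      set E' : ℕ := ee v (n + 1) with hE'def
      have hE'gcd : E' = Nat.gcd (v (n + 1)) E := ee_succ n
      have hE'dvdE : E' ∣ E := hE'gcd ▸ Nat.gcd_dvd_right _ _
      have hE'dvdv : E' ∣ v (n + 1) := hE'gcd ▸ Nat.gcd_dvd_left _ _
      have hE'pos : 0 < E' := ee_pos hv0 _
      have hEpos : 0 < E := ee_pos hv0 _
      have hE'ltE : E' < E := by
        have := hdec (n + 1) (by omega) (by omega)
        simpa using this
      set d : ℕ := E / E' with hddef
      set γ : ℕ := v (n + 1) / E' with hγdef
      have hE : E = d * E' := (Nat.div_mul_cancel hE'dvdE).symm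
      have hvγ : v (n + 1) = E' * γ := by
        rw [hγdef, Nat.mul_div_cancel' hE'dvdv]
      have hd2 : 2 ≤ d := by
        by_contra hc
        push_neg at hc
        interval_cases d <;> omega
      have hco : Nat.Coprime d γ := by
        have hg : Nat.gcd E (v (n + 1)) = E' := by rw [Nat.gcd_comm]; exact hE'gcd.symm
        have := Nat.coprime_div_gcd_div_gcd (m := E) (n := v (n + 1)) (by rw [hg]; exact hE'pos)
        rwa [hg] at this
      set S' : Set ℕ := GenSg ((fun i => v i / E) '' {i | i ≤ n}) with hS'def
      have hγF : (γ:ℤ) > d * F := by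
        have h1 : ((E:ℤ)) * F < v (n + 1) := hbound
        have h2 : ((E:ℤ)) = d * E' := by exact_mod_cast hE
        have h3 : ((v (n+1) : ℤ)) = E' * γ := by exact_mod_cast hvγ
        have h4 : (0:ℤ) < E' := by exact_mod_cast hE'pos
        have h5 : (E':ℤ) * (d * F) < (E':ℤ) * γ := by nlinarith
        exact lt_of_mul_lt_mul_left h5 (by positivity)
      have symT : SymWith (Gluing S' d γ) (d * F + (d - 1) * γ) :=
        symF.gluing (genSg_zero_mem _) (genSg_add_mem _) hd2 hco hγF
      have hsetEq : (fun i => v i / E') '' {i | i ≤ n + 1} =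
          (fun a => d * a) '' ((fun i => v i / E) '' {i | i ≤ n}) ∪ {γ} := by
        have hsplit : {i : ℕ | i ≤ n + 1} = {i : ℕ | i ≤ n} ∪ {n + 1} := by
          ext i; simp; omega
        rw [hsplit, Set.image_union, Set.image_singleton, Set.image_image]
        congr 1
        apply Set.image_congr
        intro i hi
        simp only [Set.mem_setOf_eq] at hi
        obtain ⟨t, ht⟩ := ee_dvd (v := v) hi
        rw [← hEdef] at ht
        have h1 : v i / E = t := by rw [ht]; exact Nat.mul_div_cancel_left t hEpos
        have h2 : v i / E' = d * t := by
          rw [ht, hE, show d * E' * t = E' * (d * t) by ring]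
          exact Nat.mul_div_cancel_left (d * t) hE'pos
        simp only [h1, h2]
      refine ⟨d * F + (d - 1) * γ, ?_, ?_⟩
      · rw [hsetEq, ← gluing_genSg]
        exact symT
      · intro hh
        have hchar := hineq (n + 1) (by omega) (by omega)
        simp only [Nat.add_sub_cancel] at hchar
        -- hchar : ee v n * v (n+1) < ee v (n+1) * v (n+2)
        have hcharZ : (E:ℤ) * v (n + 1) < (E':ℤ) * v (n + 2) := by exact_mod_cast hchar
        have h2 : ((E:ℤ)) = d * E' := by exact_mod_cast hE
        have h3 : ((v (n+1) : ℤ)) = E' * γ := by exact_mod_cast hvγ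
        have h4 : (0:ℤ) < E' := by exact_mod_cast hE'pos
        have h6 : (E':ℤ) * ((d:ℤ) * v (n+1)) < (E':ℤ) * v (n+2) := by nlinarith
        have h7 : (d:ℤ) * v (n+1) < v (n+2) := lt_of_mul_lt_mul_left h6 (by positivity)
        -- E' * F' = E*F + (d-1) * v(n+1) < v(n+1) + (d-1)*v(n+1) = d*v(n+1)
        have h8 : (E':ℤ) * (d * F + ((d:ℤ) - 1) * γ) = (E:ℤ) * F + ((d:ℤ) - 1) * v (n+1) := by
          rw [h2, h3]; ring
        have h9 : (E:ℤ) * F < v (n+1) := hbound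
        have h10 : (2:ℤ) ≤ d := by exact_mod_cast hd2
        have h11 : (0:ℤ) ≤ v (n+1) := by positivity
        have h12 : (v (n+1):ℤ) + ((d:ℤ) - 1) * v (n+1) = (d:ℤ) * v (n+1) := by ring
        linarith [h7, h8, h9, h12]

theorem conductor_even_genus_half (h : ℕ) (v : ℕ → ℕ) (hv : IsCharSeq h v) :
    Even (Frob (GenSg (v '' {i | i ≤ h})) + 1) ∧
    2 * ((GenSg (v '' {i | i ≤ h}))ᶜ.ncard : ℤ) =
      Frob (GenSg (v '' {i | i ≤ h})) + 1 := by
  obtain ⟨F, symF, -⟩ := charSeq_induction h v hv h (le_refl h)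
  have heh : ee v h = 1 := hv.2.2.1
  have him : (fun i => v i / ee v h) '' {i : ℕ | i ≤ h} = v '' {i : ℕ | i ≤ h} := by
    rw [heh]
    apply Set.image_congr
    intro i _
    simp
  rw [him] at symF
  have hFrob : Frob (GenSg (v '' {i | i ≤ h})) = F :=
    symF.frob_eq (genSg_zero_mem _)
  have hgenus : 2 * (((GenSg (v '' {i | i ≤ h}))ᶜ.ncard : ℤ)) = F + 1 :=
    symF.genus (genSg_zero_mem _)
  rw [hFrob]
  refine ⟨⟨((GenSg (v '' {i | i ≤ h}))ᶜ.ncard : ℤ), by linarith⟩, hgenus⟩
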